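/- For every natural number n, the number of permutations of {1,…,n} simultaneously avoiding the patterns 123, 132 and 213 equals the n-th Fibonacci number F_n, where F_0 = F_1 = 1 and F_n = F_{n-1} + F_{n-2} for n ≥ 2. -/
import Mathlib


/-- A permutation `σ` of `{1,…,n}` contains the pattern `τ` (given in one-line
notation as a function `Fin k → ℕ`) if there is a strictly increasing choice of
indices along which `σ` is order-isomorphic to `τ`. -/
def Contains {n k : ℕ} (σ : Equiv.Perm (Fin n)) (τ : Fin k → ℕ) : Prop :=
  ∃ f : Fin k → Fin n, StrictMono f ∧ ∀ a b : Fin k, σ (f a) < σ (f b) ↔ τ a < τ b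

/-- `σ` avoids the pattern `τ`. -/
def Avoids {n k : ℕ} (σ : Equiv.Perm (Fin n)) (τ : Fin k → ℕ) : Prop :=
  ¬ Contains σ τ

def p123 : Fin 3 → ℕ := ![1, 2, 3]
def p132 : Fin 3 → ℕ := ![1, 3, 2]
def p213 : Fin 3 → ℕ := ![2, 1, 3]
def p1432 : Fin 4 → ℕ := ![1, 4, 3, 2]
def p3214 : Fin 4 → ℕ := ![3, 2, 1, 4]
def p2143 : Fin 4 → ℕ := ![2, 1, 4, 3]

/-- The pattern `q_k = 1 (k+1) k (k-1) ⋯ 2` of length `k+1` (one-line notation,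
position `j` is 0-indexed here, values 1-indexed). -/
def qpat (k : ℕ) : Fin (k + 1) → ℕ := fun j => if j.val = 0 then 1 else k + 2 - j.val

/-- The pattern `r_k = k (k-1) ⋯ 2 1 (k+1)` of length `k+1`. -/
def rpat (k : ℕ) : Fin (k + 1) → ℕ := fun j => if j.val = k then k + 1 else k - j.val

/-- The pattern `s_k = (k-1)(k-2) ⋯ 2 1 (k+1) k` of length `k+1`. -/
def spat (k : ℕ) : Fin (k + 1) → ℕ := fun j =>
  if j.val = k - 1 then k + 1 else if j.val = k then k else k - 1 - j.val

/-- The pattern `u_k = 2 1 (k+1) k (k-1) ⋯ 4 3` of length `k+1`. -/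
def upat (k : ℕ) : Fin (k + 1) → ℕ := fun j =>
  if j.val = 0 then 2 else if j.val = 1 then 1 else k + 3 - j.val

/-- Fibonacci numbers with `F 0 = F 1 = 1`. -/
def F : ℕ → ℕ
  | 0 => 1
  | 1 => 1
  | n + 2 => F (n + 1) + F n

def Good {n : ℕ} (σ : Equiv.Perm (Fin n)) : Prop :=
  ∀ i j : Fin n, i.val + 2 ≤ j.val → (σ j).val < (σ i).val

lemma contains3 {n : ℕ} (σ : Equiv.Perm (Fin n)) (τ : Fin 3 → ℕ) (i m j : Fin n)
    (him : i < m) (hmj : m < j)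
    (h01 : σ i < σ m ↔ τ 0 < τ 1)
    (h02 : σ i < σ j ↔ τ 0 < τ 2)
    (h12 : σ m < σ j ↔ τ 1 < τ 2)
    (h10 : σ m < σ i ↔ τ 1 < τ 0)
    (h20 : σ j < σ i ↔ τ 2 < τ 0)
    (h21 : σ j < σ m ↔ τ 2 < τ 1) :
    Contains σ τ := by
  refine ⟨![i, m, j], ?_, ?_⟩
  · intro a b hab
    fin_cases a <;> fin_cases b <;>
      first
        | exact absurd hab (by decide)
        | exact him | exact hmj | exact him.trans hmj
  · intro a b
    fin_cases a <;> fin_cases b <;>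
      first
        | exact iff_of_false (lt_irrefl _) (lt_irrefl _)
        | exact h01 | exact h02 | exact h12 | exact h10 | exact h20 | exact h21

lemma contains_of_not_good {n : ℕ} (σ : Equiv.Perm (Fin n)) (h : ¬ Good σ) :
    Contains σ p123 ∨ Contains σ p132 ∨ Contains σ p213 := by
  simp only [Good, not_forall, not_lt] at h
  obtain ⟨i, j, hij, hle⟩ := h
  have hjn := j.isLt
  set m : Fin n := ⟨i.val + 1, by omega⟩ with hm
  have him : i < m := by simp [Fin.lt_def, hm]
  have hmj : m < j := by simp only [Fin.lt_def, hm]; omega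
  have hsij : (σ i).val < (σ j).val := by
    have h1 : σ i ≠ σ j := fun hh => by
      have := σ.injective hh
      rw [this] at hij; omega
    have : (σ i).val ≠ (σ j).val := fun hh => h1 (Fin.ext hh)
    omega
  have hsim : (σ i).val ≠ (σ m).val := fun hh => by
    have := σ.injective (Fin.ext hh); rw [this] at him; exact lt_irrefl _ him
  have hsmj : (σ m).val ≠ (σ j).val := fun hh => by
    have := σ.injective (Fin.ext hh); rw [this] at hmj; exact lt_irrefl _ hmj
  have flt : ∀ a b : Fin n, (σ a).val < (σ b).val → σ a < σ b := fun a b hh => hh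
  have fnlt : ∀ a b : Fin n, ¬ (σ a).val < (σ b).val → ¬ σ a < σ b := fun a b hh => hh
  rcases Nat.lt_or_ge (σ m).val (σ i).val with hc | hc
  · right; right
    exact contains3 σ p213 i m j him hmj
      (iff_of_false (by omega) (by decide)) (iff_of_true (by omega) (by decide))
      (iff_of_true (by omega) (by decide)) (iff_of_true (by omega) (by decide))
      (iff_of_false (by omega) (by decide)) (iff_of_false (by omega) (by decide))
  · have hc' : (σ i).val < (σ m).val := by omega
    rcases Nat.lt_or_ge (σ m).val (σ j).val with hd | hd
    · left
      exact contains3 σ p123 i m j him hmj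
        (iff_of_true (by omega) (by decide)) (iff_of_true (by omega) (by decide))
        (iff_of_true (by omega) (by decide)) (iff_of_false (by omega) (by decide))
        (iff_of_false (by omega) (by decide)) (iff_of_false (by omega) (by decide))
    · have hd' : (σ j).val < (σ m).val := by omega
      right; left
      exact contains3 σ p132 i m j him hmj
        (iff_of_true (by omega) (by decide)) (iff_of_true (by omega) (by decide))
        (iff_of_false (by omega) (by decide)) (iff_of_false (by omega) (by decide))
        (iff_of_false (by omega) (by decide)) (iff_of_true (by omega) (by decide))

lemma good_iff {n : ℕ} (σ : Equiv.Perm (Fin n)) :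
    (Avoids σ p123 ∧ Avoids σ p132 ∧ Avoids σ p213) ↔ Good σ := by
  constructor
  · intro ⟨h1, h2, h3⟩
    by_contra hg
    rcases contains_of_not_good σ hg with h | h | h
    exacts [h1 h, h2 h, h3 h]
  · intro hg
    have key : ∀ (τ : Fin 3 → ℕ), τ 0 < τ 2 → Avoids σ τ := by
      rintro τ hτ ⟨f, hmono, hiff⟩
      have h01 : f 0 < f 1 := hmono (by decide)
      have h12 : f 1 < f 2 := hmono (by decide)
      have h02 : σ (f 0) < σ (f 2) := (hiff 0 2).mpr hτ
      have hv := Fin.lt_def.mp h02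
      have := hg (f 0) (f 2) (by
        have := Fin.lt_def.mp h01
        have := Fin.lt_def.mp h12
        omega)
      omega
    exact ⟨key _ (by decide), key _ (by decide), key _ (by decide)⟩

def ext2 (j k : ℕ) (σ : Equiv.Perm (Fin k)) : Equiv.Perm (Fin (k + j)) :=
  (finCongr (Nat.add_comm k j)).trans <|
    finSumFinEquiv.symm.trans <|
      (Equiv.sumComm (Fin j) (Fin k)).trans <|
        (σ.sumCongr (Equiv.refl (Fin j))).trans finSumFinEquiv

lemma ext2_apply_lt {j k : ℕ} (σ : Equiv.Perm (Fin k)) (p : Fin (k + j))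
    (h : p.val < j) : (ext2 j k σ p).val = k + p.val := by
  have h1 : finSumFinEquiv.symm (finCongr (Nat.add_comm k j) p)
      = Sum.inl (⟨p.val, h⟩ : Fin j) := by
    rw [Equiv.symm_apply_eq]
    apply Fin.ext
    simp
  simp only [ext2, Equiv.trans_apply, h1, Equiv.sumComm_apply, Sum.swap_inl,
    Equiv.sumCongr_apply, Sum.map_inr, Equiv.refl_apply, finSumFinEquiv_apply_right]
  simp

lemma ext2_apply_ge {j k : ℕ} (σ : Equiv.Perm (Fin k)) (p : Fin (k + j))
    (h : j ≤ p.val) :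
    (ext2 j k σ p).val = (σ ⟨p.val - j, by omega⟩).val := by
  have h1 : finSumFinEquiv.symm (finCongr (Nat.add_comm k j) p)
      = Sum.inr (⟨p.val - j, by omega⟩ : Fin k) := by
    rw [Equiv.symm_apply_eq]
    apply Fin.ext
    simp
    omega
  simp only [ext2, Equiv.trans_apply, h1, Equiv.sumComm_apply, Sum.swap_inr,
    Equiv.sumCongr_apply, Sum.map_inl, finSumFinEquiv_apply_left]
  simp

lemma good_ext2 {j k : ℕ} (hj : j ≤ 2) {σ : Equiv.Perm (Fin k)} (h : Good σ) :
    Good (ext2 j k σ) := by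
  intro a b hab
  rcases Nat.lt_or_ge a.val j with ha | ha
  · rcases Nat.lt_or_ge b.val j with hb | hb
    · omega
    · rw [ext2_apply_lt σ a ha, ext2_apply_ge σ b hb]
      have := (σ ⟨b.val - j, by omega⟩).isLt
      omega
  · have hb : j ≤ b.val := by omega
    rw [ext2_apply_ge σ a ha, ext2_apply_ge σ b hb]
    exact h _ _ (show (a.val - j) + 2 ≤ b.val - j by omega)

lemma ext2_inj {j k : ℕ} {σ τ : Equiv.Perm (Fin k)}
    (h : ext2 j k σ = ext2 j k τ) : σ = τ := by
  apply Equiv.ext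
  intro i
  obtain ⟨p, hp⟩ : ∃ p : Fin (k + j), p.val = j + i.val := ⟨⟨j + i.val, by omega⟩, rfl⟩
  have hi : j ≤ p.val := by omega
  have h1 := ext2_apply_ge σ p hi
  have h2 := ext2_apply_ge τ p hi
  have hcf : (ext2 j k σ p).val = (ext2 j k τ p).val := by rw [h]
  have hii : (⟨p.val - j, by omega⟩ : Fin k) = i := by
    apply Fin.ext
    show p.val - j = i.val
    omega
  rw [hii] at h1 h2
  exact Fin.ext (by omega)

lemma good_of_ext2 {j k : ℕ} {σ : Equiv.Perm (Fin k)}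
    (h : Good (ext2 j k σ)) : Good σ := by
  intro a b hab
  obtain ⟨pa, hpa⟩ : ∃ p : Fin (k + j), p.val = j + a.val := ⟨⟨j + a.val, by omega⟩, rfl⟩
  obtain ⟨pb, hpb⟩ : ∃ p : Fin (k + j), p.val = j + b.val := ⟨⟨j + b.val, by omega⟩, rfl⟩
  have h1 := ext2_apply_ge σ pa (show j ≤ pa.val by omega)
  have h2 := ext2_apply_ge σ pb (show j ≤ pb.val by omega)
  have haa : (⟨pa.val - j, by omega⟩ : Fin k) = a := by
    apply Fin.ext; show pa.val - j = a.val; omega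
  have hbb : (⟨pb.val - j, by omega⟩ : Fin k) = b := by
    apply Fin.ext; show pb.val - j = b.val; omega
  rw [haa] at h1
  rw [hbb] at h2
  have := h pa pb (by omega)
  omega

lemma ext2_surj {j k : ℕ} (σ' : Equiv.Perm (Fin (k + j)))
    (hfront : ∀ i : Fin (k + j), i.val < j → (σ' i).val = k + i.val) :
    ∃ σ : Equiv.Perm (Fin k), ext2 j k σ = σ' := by
  obtain ⟨pos, hpos⟩ : ∃ g : Fin k → Fin (k + j), ∀ i, (g i).val = j + i.val :=
    ⟨fun i => ⟨j + i.val, by omega⟩, fun _ => rfl⟩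
  have hval : ∀ i : Fin k, (σ' (pos i)).val < k := by
    intro i
    by_contra hv
    push_neg at hv
    have hlt := (σ' (pos i)).isLt
    have hpi := hpos i
    obtain ⟨q, hq⟩ : ∃ q : Fin (k + j), q.val = (σ' (pos i)).val - k :=
      ⟨⟨_, by omega⟩, rfl⟩
    have h2 : (σ' q).val = k + q.val := hfront q (by omega)
    have heq : σ' q = σ' (pos i) := Fin.ext (by omega)
    have h3 := congrArg Fin.val (σ'.injective heq)
    omega
  let e : Fin k → Fin k := fun i => ⟨(σ' (pos i)).val, hval i⟩
  have eval : ∀ i, (e i).val = (σ' (pos i)).val := fun _ => rfl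
  have einj : Function.Injective e := by
    intro a b hab
    have h1 : (σ' (pos a)).val = (σ' (pos b)).val := by
      have := congrArg Fin.val hab
      exact this
    have h4 := congrArg Fin.val (σ'.injective (Fin.ext h1))
    have := hpos a
    have := hpos b
    apply Fin.ext
    omega
  have ebij : Function.Bijective e := Finite.injective_iff_bijective.mp einj
  refine ⟨Equiv.ofBijective e ebij, ?_⟩
  apply Equiv.ext
  intro p
  apply Fin.ext
  rcases Nat.lt_or_ge p.val j with hp | hp
  · rw [ext2_apply_lt _ p hp, hfront p hp]
  · rw [ext2_apply_ge _ p hp]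
    have key2 : ∀ X : Fin k, X.val = p.val - j → (σ' (pos X)).val = (σ' p).val := by
      intro X hX
      have hpX : pos X = p := by
        apply Fin.ext
        rw [hpos]
        omega
      rw [hpX]
    exact (eval _).trans (key2 _ rfl)

abbrev GS (n : ℕ) := {σ : Equiv.Perm (Fin n) // Good σ}

lemma card_rec (n : ℕ) :
    Nat.card (GS (n + 2)) = Nat.card (GS (n + 1)) + Nat.card (GS n) := by
  rw [← Nat.card_sum]
  symm
  apply Nat.card_congr
  refine Equiv.ofBijective (Sum.elim
    (fun x => (⟨ext2 1 (n + 1) x.1, good_ext2 (by omega) x.2⟩ : GS (n + 2)))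
    (fun x => (⟨ext2 2 n x.1, good_ext2 (by omega) x.2⟩ : GS (n + 2)))) ⟨?_, ?_⟩
  · rintro (a | a) (b | b) h
    · have h' : ext2 1 (n + 1) a.1 = ext2 1 (n + 1) b.1 := congrArg Subtype.val h
      exact congrArg Sum.inl (Subtype.ext (ext2_inj h'))
    · exfalso
      have h' : ext2 1 (n + 1) a.1 = ext2 2 n b.1 := congrArg Subtype.val h
      obtain ⟨p0, hp0⟩ : ∃ p : Fin (n + 2), p.val = 0 := ⟨⟨0, by omega⟩, rfl⟩
      have v1 := ext2_apply_lt (j := 1) (k := n + 1) a.1 p0 (show p0.val < 1 by omega)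
      have v2 := ext2_apply_lt (j := 2) (k := n) b.1 p0 (show p0.val < 2 by omega)
      have : (ext2 1 (n + 1) a.1 p0).val = (ext2 2 n b.1 p0).val := by rw [h']
      omega
    · exfalso
      have h' : ext2 2 n a.1 = ext2 1 (n + 1) b.1 := congrArg Subtype.val h
      obtain ⟨p0, hp0⟩ : ∃ p : Fin (n + 2), p.val = 0 := ⟨⟨0, by omega⟩, rfl⟩
      have v1 := ext2_apply_lt (j := 2) (k := n) a.1 p0 (show p0.val < 2 by omega)
      have v2 := ext2_apply_lt (j := 1) (k := n + 1) b.1 p0 (show p0.val < 1 by omega)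
      have : (ext2 2 n a.1 p0).val = (ext2 1 (n + 1) b.1 p0).val := by rw [h']
      omega
    · have h' : ext2 2 n a.1 = ext2 2 n b.1 := congrArg Subtype.val h
      exact congrArg Sum.inr (Subtype.ext (ext2_inj h'))
  · rintro ⟨σ', hσ'⟩
    obtain ⟨z, hz⟩ : ∃ p : Fin (n + 2), p.val = 0 := ⟨⟨0, by omega⟩, rfl⟩
    have hcard : n ≤ (σ' z).val := by
      have hg : ∀ i : Fin n, (σ' ⟨i.val + 2, by omega⟩).val < (σ' z).val := by
        intro i
        exact hσ' z ⟨i.val + 2, by omega⟩ (by simp; omega)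
      let g : Fin n → Fin ((σ' z).val) := fun i => ⟨_, hg i⟩
      have ginj : Function.Injective g := by
        intro a b hab
        have h1 : (σ' ⟨a.val + 2, by omega⟩).val = (σ' ⟨b.val + 2, by omega⟩).val := by
          have := congrArg Fin.val hab
          exact this
        have h2 := congrArg Fin.val (σ'.injective (Fin.ext h1))
        simp only at h2
        exact Fin.ext (by omega)
      simpa using Fintype.card_le_of_injective g ginj
    have hub := (σ' z).isLt
    rcases Nat.lt_or_ge (σ' z).val (n + 1) with hc | hc
    · -- σ' z = n : second case
      have hzn : (σ' z).val = n := by omega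
      obtain ⟨top, htop⟩ : ∃ p : Fin (n + 2), p.val = n + 1 := ⟨⟨n + 1, by omega⟩, rfl⟩
      have hw : σ' (σ'.symm top) = top := Equiv.apply_symm_apply σ' top
      set w := σ'.symm top with hwdef
      have hw0 : w.val ≠ 0 := by
        intro h0
        have : w = z := Fin.ext (by omega)
        rw [this] at hw
        have := congrArg Fin.val hw
        omega
      have hw2 : w.val < 2 := by
        by_contra hh
        push_neg at hh
        have := hσ' z w (by omega)
        have := congrArg Fin.val hw
        omega
      have hfront : ∀ i : Fin (n + 2), i.val < 2 → (σ' i).val = n + i.val := by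
        intro i hi
        rcases Nat.lt_or_ge i.val 1 with h1 | h1
        · have : i = z := Fin.ext (by omega)
          rw [this]
          omega
        · have : i = w := Fin.ext (by omega)
          rw [this, hw]
          omega
      obtain ⟨σ, hσ⟩ := ext2_surj (j := 2) (k := n) σ' hfront
      refine ⟨Sum.inr ⟨σ, good_of_ext2 (by rw [hσ]; exact hσ')⟩, ?_⟩
      exact Subtype.ext hσ
    · -- σ' z = n + 1 : first case
      have hzn : (σ' z).val = n + 1 := by omega
      have hfront : ∀ i : Fin (n + 2), i.val < 1 → (σ' i).val = (n + 1) + i.val := by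
        intro i hi
        have : i = z := Fin.ext (by omega)
        rw [this]
        omega
      obtain ⟨σ, hσ⟩ := ext2_surj (j := 1) (k := n + 1) σ' hfront
      refine ⟨Sum.inl ⟨σ, good_of_ext2 (by rw [hσ]; exact hσ')⟩, ?_⟩
      exact Subtype.ext hσ

lemma card_GS : ∀ n, Nat.card (GS n) = F n
  | 0 => by
    have hall : ∀ σ : Equiv.Perm (Fin 0), Good σ := fun σ i j _ => i.elim0
    rw [Nat.card_congr (Equiv.subtypeUnivEquiv hall)]
    simp [Nat.card_eq_fintype_card, F]
  | 1 => by
    have hall : ∀ σ : Equiv.Perm (Fin 1), Good σ := fun σ i j h => by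
      have := j.isLt; omega
    rw [Nat.card_congr (Equiv.subtypeUnivEquiv hall)]
    simp [Nat.card_eq_fintype_card, F]
  | (n + 2) => by
    rw [card_rec, card_GS (n + 1), card_GS n, F]

theorem stmt1 (n : ℕ) :
    Nat.card {σ : Equiv.Perm (Fin n) //
      Avoids σ p123 ∧ Avoids σ p132 ∧ Avoids σ p213} = F n := by
  rw [Nat.card_congr (Equiv.subtypeEquivRight fun σ => good_iff σ)]
  exact card_GS n
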